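/- The restriction of the bijection θ to barred permutations with no active bars induces a bijection between the set of 1̲32-avoiding permutations of [n] and the set of RGFs of length n; moreover under this bijection MAJ(p) = ls(θ(p)), des(p) + 1 = bk(θ(p)), and p_n = pro(θ(p)). -/

import Mathlib

open Finset

variable {n : ℕ}

/-- Positions of leftmost occurrences of letters in the word `w`. -/
def Lset (w : Fin n → ℕ) : Finset (Fin n) :=
  Finset.univ.filter fun i => ∀ j, j < i → w j ≠ w i

/-- Positions of rightmost occurrences of letters in the word `w`. -/
def Rset (w : Fin n → ℕ) : Finset (Fin n) :=
  Finset.univ.filter fun i => ∀ j, i < j → w j ≠ w i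

/-- The maximum letter of the word `w`. -/
def bk (w : Fin n → ℕ) : ℕ := Finset.univ.sup w

/-- The (1-indexed) position of the rightmost `1` in `w`. -/
def pro (w : Fin n → ℕ) : ℕ :=
  (Finset.univ.filter fun i => w i = 1).sup fun i => (i : ℕ) + 1

def lsi (w : Fin n → ℕ) (i : Fin n) : ℕ :=
  ((Lset w).filter fun j => j < i ∧ w j < w i).card

def rsi (w : Fin n → ℕ) (i : Fin n) : ℕ :=
  ((Rset w).filter fun j => i < j ∧ w j < w i).card

def vlsi (w : Fin n → ℕ) (i : Fin n) : ℕ :=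
  if i ∉ Rset w ∧ pro w < (i : ℕ) + 1 then lsi w i - 1
  else if i ∈ Rset w ∧ (i : ℕ) + 1 < pro w then lsi w i + 1
  else lsi w i

def vrsi (w : Fin n → ℕ) (i : Fin n) : ℕ :=
  if i ∉ Rset w ∧ pro w < (i : ℕ) + 1 then rsi w i + 1
  else if i ∈ Rset w ∧ (i : ℕ) + 1 < pro w then rsi w i - 1
  else rsi w i

def ls (w : Fin n → ℕ) : ℕ := ∑ i, lsi w i
def rs (w : Fin n → ℕ) : ℕ := ∑ i, rsi w i
def vls (w : Fin n → ℕ) : ℕ := ∑ i, vlsi w i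
def vrs (w : Fin n → ℕ) : ℕ := ∑ i, vrsi w i

/-- `w` is a restricted growth function: positive letters, `w₁ = 1`, and each
letter is at most one more than the maximum of the preceding letters. -/
def IsRGF (w : Fin n → ℕ) : Prop :=
  (∀ i, 1 ≤ w i) ∧ (∀ i : Fin n, (i : ℕ) = 0 → w i = 1) ∧
    ∀ i : Fin n, 0 < (i : ℕ) → w i ≤ (Finset.univ.filter fun j => j < i).sup w + 1

/-- The ascent set of `w`. -/
def AscSet (w : Fin n → ℕ) : Finset (Fin n) :=
  Finset.univ.filter fun i => ∃ j : Fin n, (j : ℕ) = (i : ℕ) + 1 ∧ w i < w j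

open Finset

variable {n : ℕ}

/-- The word (in one-line notation, with letters `1,...,n`) of a permutation of `[n]`. -/
def pw (p : Equiv.Perm (Fin n)) : Fin n → ℕ := fun i => (p i : ℕ) + 1

/-- Descent number of a word: positions `i` with `w_i > w_{i+1}`. -/
def desW (w : Fin n → ℕ) : ℕ :=
  (Finset.univ.filter fun i : Fin n => ∃ j : Fin n, (j : ℕ) = (i : ℕ) + 1 ∧ w j < w i).card

/-- Major index of a word: the sum of the (1-indexed) descent positions. -/
def majW (w : Fin n → ℕ) : ℕ :=
  ∑ i ∈ Finset.univ.filter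
      (fun i : Fin n => ∃ j : Fin n, (j : ℕ) = (i : ℕ) + 1 ∧ w j < w i), ((i : ℕ) + 1)

/-- Occurrences of the vincular pattern 2-31: `i < j` with `w_{j+1} < w_i < w_j`. -/
def pat2_31 (w : Fin n → ℕ) : ℕ :=
  ((Finset.univ ×ˢ Finset.univ).filter fun q : Fin n × Fin n =>
    q.1 < q.2 ∧ ∃ j' : Fin n, (j' : ℕ) = (q.2 : ℕ) + 1 ∧ w j' < w q.1 ∧ w q.1 < w q.2).card

/-- Occurrences of the vincular pattern 2-13: `i < j` with `w_j < w_i < w_{j+1}`. -/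
def pat2_13 (w : Fin n → ℕ) : ℕ :=
  ((Finset.univ ×ˢ Finset.univ).filter fun q : Fin n × Fin n =>
    q.1 < q.2 ∧ ∃ j' : Fin n, (j' : ℕ) = (q.2 : ℕ) + 1 ∧ w q.2 < w q.1 ∧ w q.1 < w j').card

/-- Occurrences of the vincular pattern 1-32: `i < j` with `w_i < w_{j+1} < w_j`. -/
def pat1_32 (w : Fin n → ℕ) : ℕ :=
  ((Finset.univ ×ˢ Finset.univ).filter fun q : Fin n × Fin n =>
    q.1 < q.2 ∧ ∃ j' : Fin n, (j' : ℕ) = (q.2 : ℕ) + 1 ∧ w q.1 < w j' ∧ w j' < w q.2).card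

/-- Occurrences of the vincular pattern 3-21: `i < j` with `w_{j+1} < w_j < w_i`. -/
def pat3_21 (w : Fin n → ℕ) : ℕ :=
  ((Finset.univ ×ˢ Finset.univ).filter fun q : Fin n × Fin n =>
    q.1 < q.2 ∧ ∃ j' : Fin n, (j' : ℕ) = (q.2 : ℕ) + 1 ∧ w j' < w q.2 ∧ w q.2 < w q.1).card

/-- The Babson–Steingrímsson statistic BAST = (21) + (2-13) + (1-32) + (3-21). -/
def BAST (w : Fin n → ℕ) : ℕ := desW w + pat2_13 w + pat1_32 w + pat3_21 w

/-- `w` avoids the vincular pattern 1-32: there is no `i < j` with `w_i < w_{j+1} < w_j`. -/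
def Avoids132 (w : Fin n → ℕ) : Prop :=
  ∀ i j j' : Fin n, i < j → (j' : ℕ) = (j : ℕ) + 1 → ¬(w i < w j' ∧ w j' < w j)

/-- `w` is an unrestricted growth function: positive letters, and every value
`1 ≤ j ≤ bk(w)` occurs in `w`. -/
def IsURG (w : Fin n → ℕ) : Prop :=
  (∀ i, 1 ≤ w i) ∧ ∀ j, 1 ≤ j → j ≤ Finset.univ.sup w → ∃ i, w i = j

/-- `bars` is a valid set of bars for the permutation `p`: each bar sits between
two consecutive letters, and there is a bar at every descent of `p`. -/
def IsBarred (p : Equiv.Perm (Fin n)) (bars : Finset (Fin n)) : Prop :=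
  (∀ i ∈ bars, (i : ℕ) + 1 < n) ∧
    ∀ i j : Fin n, (j : ℕ) = (i : ℕ) + 1 → p j < p i → i ∈ bars

/-- The word θ(p̄): the letter `i` (here `i : Fin n` encodes the letter `i+1`) is sent to
one plus the number of bars lying to the right of the letter `i+1` in the barred permutation. -/
def theta (p : Equiv.Perm (Fin n)) (bars : Finset (Fin n)) : Fin n → ℕ :=
  fun i => 1 + (bars.filter fun b => p.symm i ≤ b).card

/-- The set of descent positions of `p`, used as the (fixed) bars. -/
def descBars (p : Equiv.Perm (Fin n)) : Finset (Fin n) :=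
  Finset.univ.filter fun i : Fin n => ∃ j : Fin n, (j : ℕ) = (i : ℕ) + 1 ∧ p j < p i

/-- θ restricted to barred permutations with no active bars (bars exactly at descents). -/
def theta0 (p : Equiv.Perm (Fin n)) : Fin n → ℕ := theta p (descBars p)

namespace Stmt15Aux

variable {n : ℕ}

lemma mem_descBars {p : Equiv.Perm (Fin n)} {b : Fin n} :
    b ∈ descBars p ↔ ∃ j : Fin n, (j : ℕ) = (b : ℕ) + 1 ∧ p j < p b := by
  simp [descBars]

lemma desc_succ_lt {p : Equiv.Perm (Fin n)} {b : Fin n} (hb : b ∈ descBars p) :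
    (b : ℕ) + 1 < n := by
  rcases mem_descBars.1 hb with ⟨j, hj, _⟩
  have := j.isLt; omega

/-- If `p r < p q` with `q < r`, there is a descent in `[q, r)`. -/
lemma exists_desc (p : Equiv.Perm (Fin n)) :
    ∀ m : ℕ, ∀ q r : Fin n, (r : ℕ) = (q : ℕ) + m → p r < p q →
      ∃ b ∈ descBars p, q ≤ b ∧ b < r := by
  intro m
  induction m with
  | zero =>
    intro q r hr hp
    have : r = q := Fin.ext (by omega)
    subst this; exact absurd hp (lt_irrefl _)
  | succ m ih =>
    intro q r hr hp
    have hrm : (q : ℕ) + m < n := by have := r.isLt; omega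
    set r' : Fin n := ⟨(q : ℕ) + m, hrm⟩ with hr'
    by_cases hcase : p r < p r'
    · refine ⟨r', mem_descBars.2 ⟨r, by simp only [hr']; omega, hcase⟩, ?_, ?_⟩
      · exact Fin.mk_le_of_le_val (by simp only [hr']; omega)
      · simp only [Fin.lt_def, hr']; omega
    · push_neg at hcase
      have : p r' < p q := lt_of_le_of_lt hcase hp
      rcases ih q r' rfl this with ⟨b, hb, hqb, hbr⟩
      exact ⟨b, hb, hqb, lt_of_lt_of_le hbr (by simp only [Fin.le_def, hr']; omega)⟩

/-- If there is no descent in `[q, r)` and `q ≤ r`, then `p q ≤ p r`. -/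
lemma run_mono {p : Equiv.Perm (Fin n)} {q r : Fin n} (hqr : q ≤ r)
    (h : ∀ b ∈ descBars p, ¬(q ≤ b ∧ b < r)) : p q ≤ p r := by
  by_contra hc
  push_neg at hc
  rcases exists_desc p ((r : ℕ) - (q : ℕ)) q r (by omega) hc with ⟨b, hb, h1, h2⟩
  exact h b hb ⟨h1, h2⟩

/-- The weight of a position: one plus the number of descents weakly to its right. -/
def wt (p : Equiv.Perm (Fin n)) (q : Fin n) : ℕ :=
  1 + ((descBars p).filter fun b => q ≤ b).card

lemma theta0_apply (p : Equiv.Perm (Fin n)) (i : Fin n) :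
    theta0 p i = wt p (p.symm i) := rfl

lemma theta0_apply' (p : Equiv.Perm (Fin n)) (q : Fin n) :
    theta0 p (p q) = wt p q := by
  rw [theta0_apply]; simp

lemma wt_antitone (p : Equiv.Perm (Fin n)) {q q' : Fin n} (h : q ≤ q') :
    wt p q' ≤ wt p q := by
  unfold wt
  have : ((descBars p).filter fun b => q' ≤ b) ⊆ ((descBars p).filter fun b => q ≤ b) := by
    intro b hb
    simp only [Finset.mem_filter] at *
    exact ⟨hb.1, le_trans h hb.2⟩
  exact Nat.add_le_add_left (Finset.card_le_card this) 1

lemma wt_pos (p : Equiv.Perm (Fin n)) (q : Fin n) : 1 ≤ wt p q := Nat.le_add_right 1 _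

/-- If there is no descent in `[q, q')` then `wt q = wt q'`. -/
lemma wt_eq_of_no_desc {p : Equiv.Perm (Fin n)} {q q' : Fin n} (hqq : q ≤ q')
    (h : ∀ b ∈ descBars p, ¬(q ≤ b ∧ b < q')) : wt p q = wt p q' := by
  unfold wt
  have heq : ((descBars p).filter fun b => q ≤ b) = ((descBars p).filter fun b => q' ≤ b) := by
    apply Finset.ext
    intro b
    simp only [Finset.mem_filter]
    constructor
    · rintro ⟨h1, h2⟩
      refine ⟨h1, ?_⟩
      by_contra hc; push_neg at hc
      exact h b h1 ⟨h2, hc⟩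
    · rintro ⟨h1, h2⟩; exact ⟨h1, le_trans hqq h2⟩
  rw [heq]

/-- Conversely: if `wt q = wt q'` with `q ≤ q'`, there is no descent in `[q, q')`. -/
lemma no_desc_of_wt_eq {p : Equiv.Perm (Fin n)} {q q' : Fin n}
    (h : wt p q = wt p q') : ∀ b ∈ descBars p, ¬(q ≤ b ∧ b < q') := by
  rintro b hb ⟨h1, h2⟩
  have hss : ((descBars p).filter fun x => q' ≤ x) ⊂ ((descBars p).filter fun x => q ≤ x) := by
    constructor
    · intro x hx
      simp only [Finset.mem_filter] at *
      exact ⟨hx.1, le_trans (le_trans h1 (le_of_lt h2)) hx.2⟩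
    · intro hsub
      have := hsub (Finset.mem_filter.2 ⟨hb, h1⟩)
      simp only [Finset.mem_filter] at this
      exact absurd this.2 (not_le.2 h2)
  have := Finset.card_lt_card hss
  unfold wt at h; omega

end Stmt15Aux
namespace Stmt15Aux

variable {n : ℕ}

/-- The order in which letters appear in `p`: larger weight first, then smaller letter. -/
def prec (w : Fin n → ℕ) (i' i : Fin n) : Prop :=
  w i < w i' ∨ (w i' = w i ∧ i' < i)

instance {w : Fin n → ℕ} {i' i : Fin n} : Decidable (prec w i' i) := by
  unfold prec; infer_instance

lemma prec_asymm {w : Fin n → ℕ} {i' i : Fin n} (h : prec w i' i) (h' : prec w i i') : False := by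
  rcases h with h | ⟨h1, h2⟩ <;> rcases h' with h' | ⟨h1', h2'⟩
  · omega
  · omega
  · omega
  · exact absurd h2' (not_lt.2 (le_of_lt h2))

lemma prec_irrefl {w : Fin n → ℕ} {i : Fin n} (h : prec w i i) : False :=
  prec_asymm h h

lemma prec_of_pos_lt {p : Equiv.Perm (Fin n)} {i' i : Fin n}
    (h : p.symm i' < p.symm i) : prec (theta0 p) i' i := by
  rw [prec, theta0_apply, theta0_apply]
  have hle : wt p (p.symm i) ≤ wt p (p.symm i') := wt_antitone p (le_of_lt h)
  rcases lt_or_eq_of_le hle with hlt | heq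
  · exact Or.inl hlt
  · right
    refine ⟨heq.symm, ?_⟩
    have hmono : p (p.symm i') ≤ p (p.symm i) :=
      run_mono (le_of_lt h) (no_desc_of_wt_eq heq.symm)
    simp only [Equiv.apply_symm_apply] at hmono
    rcases lt_or_eq_of_le hmono with h1 | h1
    · exact h1
    · exact absurd (show p.symm i' = p.symm i by rw [h1]) (ne_of_lt h)
  
lemma pos_lt_iff_prec {p : Equiv.Perm (Fin n)} {i' i : Fin n} :
    p.symm i' < p.symm i ↔ prec (theta0 p) i' i := by
  constructor
  · exact prec_of_pos_lt
  · intro h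
    rcases lt_trichotomy (p.symm i') (p.symm i) with hc | hc | hc
    · exact hc
    · have : i' = i := by
        have := congrArg p hc; simpa using this
      subst this; exact absurd h prec_irrefl
    · exact absurd h (fun h => prec_asymm h (prec_of_pos_lt hc))

lemma pos_formula (p : Equiv.Perm (Fin n)) (i : Fin n) :
    (p.symm i : ℕ) = (Finset.univ.filter fun i' => prec (theta0 p) i' i).card := by
  have h1 : (Finset.univ.filter fun i' => prec (theta0 p) i' i)
      = (Finset.Iio (p.symm i)).image p := by
    apply Finset.ext
    intro b
    simp only [Finset.mem_filter, Finset.mem_univ, true_and, Finset.mem_image, Finset.mem_Iio]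
    constructor
    · intro hb
      exact ⟨p.symm b, pos_lt_iff_prec.2 hb, by simp⟩
    · rintro ⟨a, ha, rfl⟩
      apply pos_lt_iff_prec.1
      simpa using ha
  rw [h1, Finset.card_image_of_injective _ p.injective, Fin.card_Iio]

lemma theta0_injOn : Function.Injective (fun p : Equiv.Perm (Fin n) => theta0 p) := by
  intro p p' h
  simp only at h
  have hsymm : p.symm = p'.symm := by
    apply Equiv.ext
    intro i
    apply Fin.ext
    rw [pos_formula p i, pos_formula p' i, h]
  have : p.symm.symm = p'.symm.symm := by rw [hsymm]
  simpa using this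

end Stmt15Aux
namespace Stmt15Aux

variable {n : ℕ}

/-- Letters with value at least `v`. -/
def Tset (w : Fin n → ℕ) (v : ℕ) : Finset (Fin n) :=
  Finset.univ.filter fun i => v ≤ w i

lemma mem_Tset {w : Fin n → ℕ} {v : ℕ} {i : Fin n} : i ∈ Tset w v ↔ v ≤ w i := by
  simp [Tset]

lemma Tset_nonempty {w : Fin n → ℕ} {v : ℕ} (h1 : 1 ≤ v) (h2 : v ≤ bk w) :
    (Tset w v).Nonempty := by
  have hne : (Finset.univ : Finset (Fin n)).Nonempty := by
    rcases Nat.eq_zero_or_pos n with h | h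
    · subst h
      exfalso
      have : bk w = 0 := by simp [bk]
      omega
    · exact ⟨⟨0, h⟩, Finset.mem_univ _⟩
  obtain ⟨i, _, hi⟩ := Finset.exists_mem_eq_sup Finset.univ hne w
  exact ⟨i, mem_Tset.2 (by unfold bk at h2; omega)⟩

/-- The smallest letter with value at least `v`. -/
def M (w : Fin n → ℕ) (v : ℕ) (h : (Tset w v).Nonempty) : Fin n := (Tset w v).min' h

lemma M_mem {w : Fin n → ℕ} {v : ℕ} (h : (Tset w v).Nonempty) : v ≤ w (M w v h) :=
  mem_Tset.1 ((Tset w v).min'_mem h)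

lemma M_min {w : Fin n → ℕ} {v : ℕ} (h : (Tset w v).Nonempty) {i : Fin n}
    (hi : v ≤ w i) : M w v h ≤ i :=
  Finset.min'_le _ _ (mem_Tset.2 hi)

lemma le_bk {w : Fin n → ℕ} (i : Fin n) : w i ≤ bk w :=
  Finset.le_sup (Finset.mem_univ i)

lemma w_M {w : Fin n → ℕ} (hw : IsRGF w) {v : ℕ} (h1 : 1 ≤ v)
    (h : (Tset w v).Nonempty) : w (M w v h) = v := by
  set m := M w v h with hm
  have hvm : v ≤ w m := M_mem h
  by_contra hne
  have hge2 : 2 ≤ w m := by omega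
  have hpos : 0 < (m : ℕ) := by
    rcases Nat.eq_zero_or_pos (m : ℕ) with h0 | h0
    · have := hw.2.1 m h0; omega
    · exact h0
  have hgrow := hw.2.2 m hpos
  have hsup : v ≤ (Finset.univ.filter fun j => j < m).sup w := by omega
  have hfne : (Finset.univ.filter fun j => j < m).Nonempty := by
    rcases Finset.eq_empty_or_nonempty (Finset.univ.filter fun j => j < m) with he | hne'
    · rw [he] at hsup; simp at hsup; omega
    · exact hne'
  obtain ⟨j, hj, hjs⟩ := Finset.exists_mem_eq_sup _ hfne w
  simp only [Finset.mem_filter, Finset.mem_univ, true_and] at hj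
  have : v ≤ w j := by omega
  exact absurd (M_min h this) (not_le.2 hj)

lemma M_lt_M {w : Fin n → ℕ} (hw : IsRGF w) {v v' : ℕ} (h1 : 1 ≤ v) (hvv : v < v')
    (h : (Tset w v).Nonempty) (h' : (Tset w v').Nonempty) : M w v h < M w v' h' := by
  have hle : M w v h ≤ M w v' h' := M_min h (le_trans (le_of_lt hvv) (M_mem h'))
  rcases lt_or_eq_of_le hle with hlt | heq
  · exact hlt
  · exfalso
    have e1 : w (M w v h) = v := w_M hw h1 h
    have e2 : v' ≤ w (M w v' h') := M_mem h'
    rw [heq] at e1; omega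

lemma mem_Lset {w : Fin n → ℕ} {i : Fin n} :
    i ∈ Lset w ↔ ∀ j, j < i → w j ≠ w i := by simp [Lset]

lemma lsi_eq {w : Fin n → ℕ} (hw : IsRGF w) (i : Fin n) : lsi w i = w i - 1 := by
  unfold lsi
  have : (((Lset w).filter fun j => j < i ∧ w j < w i)).card
      = (Finset.Ico 1 (w i)).card := by
    apply Finset.card_nbij (fun j => w j)
    · intro j hj
      simp only [Finset.mem_coe, Finset.mem_filter] at hj
      exact Finset.mem_Ico.2 ⟨hw.1 j, hj.2.2⟩
    · intro j hj j' hj' he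
      simp only [Finset.mem_coe, Finset.mem_filter] at hj hj'
      rcases lt_trichotomy j j' with hc | hc | hc
      · exact absurd (show w j = w j' from he) (mem_Lset.1 hj'.1 j hc)
      · exact hc
      · exact absurd (show w j' = w j from he.symm) (mem_Lset.1 hj.1 j' hc)
    · intro v hv
      simp only [Finset.mem_coe, Finset.mem_Ico] at hv
      have h2 : v ≤ bk w := le_trans (le_of_lt hv.2) (le_bk i)
      have hne := Tset_nonempty hv.1 h2
      set j := M w v hne with hj
      have hwj : w j = v := w_M hw hv.1 hne
      have hji : j < i := by
        have hle : j ≤ i := M_min hne (le_of_lt (by omega : v < w i))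
        rcases lt_or_eq_of_le hle with h | h
        · exact h
        · exfalso; rw [h] at hwj; omega
      refine ⟨j, ?_, hwj⟩
      simp only [Finset.mem_coe, Finset.mem_filter]
      refine ⟨mem_Lset.2 ?_, hji, by omega⟩
      intro j'' hj'' hne''
      rw [hwj] at hne''
      exact absurd (M_min hne (le_of_eq hne''.symm)) (not_le.2 hj'')
  rw [this, Nat.card_Ico]

end Stmt15Aux
namespace Stmt15Aux

variable {n : ℕ}

lemma avoids_perm {p : Equiv.Perm (Fin n)} (hp : Avoids132 (pw p)) :
    ∀ a b j' : Fin n, a < b → (j' : ℕ) = (b : ℕ) + 1 → ¬(p a < p j' ∧ p j' < p b) := by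
  intro a b j' hab hj' ⟨h1, h2⟩
  refine hp a b j' hab hj' ⟨?_, ?_⟩
  · exact Nat.add_lt_add_right (Fin.lt_def.1 h1) 1
  · exact Nat.add_lt_add_right (Fin.lt_def.1 h2) 1

lemma avoids_perm' {p : Equiv.Perm (Fin n)} (hp : Avoids132 (pw p)) :
    ∀ a b j' : Fin n, a < b → (j' : ℕ) = (b : ℕ) + 1 → ¬((p a : ℕ) < (p j' : ℕ) ∧ (p j' : ℕ) < (p b : ℕ)) := by
  intro a b j' hab hj' ⟨h1, h2⟩
  exact avoids_perm hp a b j' hab hj' ⟨Fin.lt_def.2 h1, Fin.lt_def.2 h2⟩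

lemma wt_desc_succ {p : Equiv.Perm (Fin n)} {b j : Fin n} (hb : b ∈ descBars p)
    (hj : (j : ℕ) = (b : ℕ) + 1) : wt p b = wt p j + 1 := by
  unfold wt
  have heq : ((descBars p).filter fun x => b ≤ x)
      = insert b ((descBars p).filter fun x => j ≤ x) := by
    apply Finset.ext
    intro x
    simp only [Finset.mem_filter, Finset.mem_insert]
    constructor
    · rintro ⟨h1, h2⟩
      rcases eq_or_lt_of_le h2 with h | h
      · exact Or.inl h.symm
      · exact Or.inr ⟨h1, by rw [Fin.le_def, hj]; exact h⟩
    · rintro (rfl | ⟨h1, h2⟩)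
      · exact ⟨hb, le_refl _⟩
      · refine ⟨h1, ?_⟩
        rw [Fin.le_def, hj] at h2
        rw [Fin.le_def]; omega
  rw [heq, Finset.card_insert_of_notMem]
  · omega
  · intro hmem
    simp only [Finset.mem_filter] at hmem
    rw [Fin.le_def, hj] at hmem
    omega

/-- If the weight of position `q` exceeds 1, there is a smaller letter whose weight is
one less — provided `p` avoids 1-32 or the letter at `q` is forced small. -/
lemma exists_prev {p : Equiv.Perm (Fin n)} (hp : Avoids132 (pw p)) {q : Fin n}
    (hS : ((descBars p).filter fun x => q ≤ x).Nonempty) :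
    ∃ i' : Fin n, i' < p q ∧ wt p (p.symm i') + 1 = wt p q := by
  set S := (descBars p).filter fun x => q ≤ x with hSdef
  set b := S.min' hS with hbdef
  have hbS : b ∈ S := S.min'_mem hS
  simp only [hSdef, Finset.mem_filter] at hbS
  obtain ⟨hbD, hqb⟩ := hbS
  obtain ⟨j, hj, hpj⟩ := mem_descBars.1 hbD
  have hnodesc : ∀ b' ∈ descBars p, ¬(q ≤ b' ∧ b' < b) := by
    rintro b' hb' ⟨h1, h2⟩
    exact absurd (Finset.min'_le S b' (Finset.mem_filter.2 ⟨hb', h1⟩)) (not_le.2 h2)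
  have hqleb : p q ≤ p b := run_mono hqb hnodesc
  have hqj : q < j := by rw [Fin.lt_def, hj]; rw [Fin.le_def] at hqb; omega
  have hwt : wt p (p.symm (p j)) + 1 = wt p q := by
    rw [Equiv.symm_apply_apply, ← wt_desc_succ hbD hj, wt_eq_of_no_desc hqb hnodesc]
  refine ⟨p j, ?_, hwt⟩
  rcases eq_or_lt_of_le hqb with hqeqb | hqltb
  · -- q = b : p j < p b = p q
    rw [← hqeqb] at hpj; exact hpj
  · -- q < b : if p q ≤ p j we get the pattern
    by_contra hc
    push_neg at hc
    have hne : p q ≠ p j := fun e => (ne_of_lt hqj) (p.injective e)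
    have h1 : p q < p j := lt_of_le_of_ne hc hne
    exact avoids_perm hp q b j hqltb hj ⟨h1, hpj⟩

lemma avoids_isRGF {p : Equiv.Perm (Fin n)} (hp : Avoids132 (pw p)) :
    IsRGF (theta0 p) := by
  refine ⟨fun i => Nat.le_add_right 1 _, ?_, ?_⟩
  · intro i hi
    by_contra hc
    rw [theta0_apply] at hc
    have h2 : 2 ≤ wt p (p.symm i) := by
      have := wt_pos p (p.symm i); omega
    have hS : ((descBars p).filter fun x => p.symm i ≤ x).Nonempty := by
      rw [← Finset.card_pos]
      unfold wt at h2; omega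
    obtain ⟨i', hlt, _⟩ := exists_prev hp hS
    rw [Equiv.apply_symm_apply] at hlt
    rw [Fin.lt_def, hi] at hlt
    omega
  · intro i hipos
    rcases Nat.lt_or_ge (theta0 p i) 2 with h | h
    · have := wt_pos p (p.symm i); rw [theta0_apply] at h ⊢
      calc wt p (p.symm i) ≤ 1 := by omega
      _ ≤ _ + 1 := Nat.le_add_left 1 _
    · have hS : ((descBars p).filter fun x => p.symm i ≤ x).Nonempty := by
        rw [← Finset.card_pos]
        rw [theta0_apply] at h; unfold wt at h; omega
      obtain ⟨i', hlt, hwt⟩ := exists_prev hp hS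
      rw [Equiv.apply_symm_apply] at hlt
      have hsup : wt p (p.symm i') ≤ (Finset.univ.filter fun j => j < i).sup (theta0 p) := by
        rw [← theta0_apply]
        exact Finset.le_sup (Finset.mem_filter.2 ⟨Finset.mem_univ _, hlt⟩)
      rw [theta0_apply]
      omega

end Stmt15Aux
namespace Stmt15Aux

variable {n : ℕ}

lemma descBars_filter_eq (p : Equiv.Perm (Fin n)) :
    (Finset.univ.filter fun i : Fin n =>
      ∃ j : Fin n, (j : ℕ) = (i : ℕ) + 1 ∧ pw p j < pw p i) = descBars p := by
  apply Finset.ext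
  intro b
  rw [mem_descBars, Finset.mem_filter]
  simp only [Finset.mem_univ, true_and, pw]
  constructor
  · rintro ⟨j, hj, hlt⟩
    exact ⟨j, hj, Fin.lt_def.2 (by omega)⟩
  · rintro ⟨j, hj, hlt⟩
    exact ⟨j, hj, by have := Fin.lt_def.1 hlt; omega⟩

lemma desW_eq (p : Equiv.Perm (Fin n)) : desW (pw p) = (descBars p).card := by
  unfold desW
  rw [descBars_filter_eq]

lemma bk_theta0 (p : Equiv.Perm (Fin n)) (hn : 0 < n) :
    bk (theta0 p) = (descBars p).card + 1 := by
  apply le_antisymm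
  · apply Finset.sup_le
    intro i _
    rw [theta0_apply]
    unfold wt
    have := Finset.card_le_card (Finset.filter_subset (fun b => p.symm i ≤ b) (descBars p))
    omega
  · have h0 : theta0 p (p ⟨0, hn⟩) = (descBars p).card + 1 := by
      rw [theta0_apply', wt]
      rw [Finset.filter_true_of_mem]
      · omega
      · intro b _
        rw [Fin.le_def]
        exact Nat.zero_le _
    rw [← h0]
    exact Finset.le_sup (Finset.mem_univ _)

lemma wt_last (p : Equiv.Perm (Fin n)) (hn : 0 < n) :
    wt p ⟨n - 1, Nat.sub_lt hn Nat.one_pos⟩ = 1 := by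
  rw [wt]
  have : ((descBars p).filter fun b => (⟨n - 1, Nat.sub_lt hn Nat.one_pos⟩ : Fin n) ≤ b)
      = ∅ := by
    apply Finset.filter_eq_empty_iff.2
    intro b hb
    have := desc_succ_lt hb
    rw [Fin.le_def]
    simp only
    omega
  rw [this]
  simp

lemma pro_theta0 (p : Equiv.Perm (Fin n)) (hn : 0 < n) :
    pro (theta0 p) = (p ⟨n - 1, Nat.sub_lt hn Nat.one_pos⟩ : ℕ) + 1 := by
  set lst : Fin n := ⟨n - 1, Nat.sub_lt hn Nat.one_pos⟩ with hlst
  have hwlst : theta0 p (p lst) = 1 := by rw [theta0_apply']; exact wt_last p hn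
  apply le_antisymm
  · apply Finset.sup_le
    intro i hi
    simp only [Finset.mem_filter, Finset.mem_univ, true_and] at hi
    have hq : p (p.symm i) ≤ p lst := by
      apply run_mono
      · rw [Fin.le_def]
        simp only [hlst]
        have := (p.symm i).isLt
        omega
      · rintro b hb ⟨h1, _⟩
        rw [theta0_apply] at hi
        unfold wt at hi
        have : ((descBars p).filter fun x => p.symm i ≤ x).card = 0 := by omega
        rw [Finset.card_eq_zero] at this
        have := Finset.eq_empty_iff_forall_notMem.1 this b
        exact this (Finset.mem_filter.2 ⟨hb, h1⟩)
    rw [Equiv.apply_symm_apply] at hq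
    have := Fin.le_def.1 hq
    omega
  · unfold pro
    exact Finset.le_sup (f := fun i : Fin n => (i : ℕ) + 1)
      (Finset.mem_filter.2 ⟨Finset.mem_univ _, hwlst⟩)

lemma card_symm_le (p : Equiv.Perm (Fin n)) (b : Fin n) :
    (Finset.univ.filter fun i => p.symm i ≤ b).card = (b : ℕ) + 1 := by
  have h1 : (Finset.univ.filter fun i => p.symm i ≤ b) = (Finset.Iic b).image p := by
    apply Finset.ext
    intro x
    simp only [Finset.mem_filter, Finset.mem_univ, true_and, Finset.mem_image, Finset.mem_Iic]
    constructor
    · intro hx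
      exact ⟨p.symm x, hx, by simp⟩
    · rintro ⟨a, ha, rfl⟩
      simpa using ha
  rw [h1, Finset.card_image_of_injective _ p.injective, Fin.card_Iic]

lemma maj_eq_ls {p : Equiv.Perm (Fin n)} (hp : Avoids132 (pw p)) :
    majW (pw p) = ls (theta0 p) := by
  have hrgf := avoids_isRGF hp
  have hls : ls (theta0 p) = ∑ i, (theta0 p i - 1) := by
    unfold ls
    exact Finset.sum_congr rfl fun i _ => lsi_eq hrgf i
  have hcard : ∀ i, theta0 p i - 1 = ((descBars p).filter fun b => p.symm i ≤ b).card := by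
    intro i
    rw [theta0_apply, wt]
    omega
  rw [hls]
  calc majW (pw p) = ∑ b ∈ descBars p, ((b : ℕ) + 1) := by
        unfold majW
        rw [descBars_filter_eq]
    _ = ∑ b ∈ descBars p, (Finset.univ.filter fun i => p.symm i ≤ b).card := by
        exact Finset.sum_congr rfl fun b _ => (card_symm_le p b).symm
    _ = ∑ b ∈ descBars p, ∑ i : Fin n, if p.symm i ≤ b then 1 else 0 := by
        refine Finset.sum_congr rfl fun b _ => ?_
        rw [Finset.card_filter]
    _ = ∑ i : Fin n, ∑ b ∈ descBars p, if p.symm i ≤ b then 1 else 0 := Finset.sum_comm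
    _ = ∑ i, (theta0 p i - 1) := by
        refine Finset.sum_congr rfl fun i _ => ?_
        rw [hcard i, Finset.card_filter]

end Stmt15Aux
namespace Stmt15Aux

variable {n : ℕ}

/-- Sorting key: larger letters of `w` first, ties broken by position. -/
def key (w : Fin n → ℕ) (i : Fin n) : ℕ := (bk w - w i) * n + (i : ℕ)

/-- The permutation listing letters by decreasing `w`-value, increasing within a value. -/
def sortPerm (w : Fin n → ℕ) : Equiv.Perm (Fin n) := Tuple.sort (key w)

lemma key_inj (w : Fin n → ℕ) : Function.Injective (key w) := by
  intro i i' h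
  unfold key at h
  have h1 : (i : ℕ) % n = (i' : ℕ) % n := by
    have h2 : ((bk w - w i) * n + (i : ℕ)) % n = ((bk w - w i') * n + (i' : ℕ)) % n :=
      congrArg (fun x => x % n) h
    rw [Nat.mul_add_mod', Nat.mul_add_mod'] at h2
    exact h2
  rw [Nat.mod_eq_of_lt i.isLt, Nat.mod_eq_of_lt i'.isLt] at h1
  exact Fin.ext h1

lemma key_lt_decode {w : Fin n → ℕ} {i i' : Fin n} (h : key w i < key w i') :
    w i' ≤ w i ∧ (w i = w i' → i < i') := by
  unfold key at h
  have hi : (i : ℕ) < n := i.isLt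
  have hi' : (i' : ℕ) < n := i'.isLt
  have hbk : w i ≤ bk w := le_bk i
  have hbk' : w i' ≤ bk w := le_bk i'
  have hle : bk w - w i ≤ bk w - w i' := by
    by_contra hc
    push_neg at hc
    have h2 : (bk w - w i') + 1 ≤ bk w - w i := hc
    have h3 : ((bk w - w i') + 1) * n ≤ (bk w - w i) * n := Nat.mul_le_mul_right n h2
    rw [Nat.succ_mul] at h3
    omega
  constructor
  · omega
  · intro he
    rw [he] at h
    rw [Fin.lt_def]
    omega

lemma key_sorted (w : Fin n → ℕ) {q q' : Fin n} (h : q < q') :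
    key w (sortPerm w q) < key w (sortPerm w q') := by
  have hle : key w (sortPerm w q) ≤ key w (sortPerm w q') :=
    Tuple.monotone_sort (key w) (le_of_lt h)
  rcases lt_or_eq_of_le hle with hlt | heq
  · exact hlt
  · exfalso
    have : sortPerm w q = sortPerm w q' := key_inj w heq
    have : q = q' := (sortPerm w).injective this
    omega

lemma vseq_antitone (w : Fin n → ℕ) {q q' : Fin n} (h : q ≤ q') :
    w (sortPerm w q') ≤ w (sortPerm w q) := by
  rcases lt_or_eq_of_le h with hlt | heq
  · exact (key_lt_decode (key_sorted w hlt)).1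
  · rw [heq]

lemma letter_lt_of_eq (w : Fin n → ℕ) {q q' : Fin n} (h : q < q')
    (he : w (sortPerm w q) = w (sortPerm w q')) :
    sortPerm w q < sortPerm w q' :=
  (key_lt_decode (key_sorted w h)).2 he

/-- Forward: a descent of `sortPerm w` is a drop of `w`-values. -/
lemma drop_of_desc {w : Fin n → ℕ} {b j : Fin n} (hj : (j : ℕ) = (b : ℕ) + 1)
    (hd : sortPerm w j < sortPerm w b) : w (sortPerm w j) < w (sortPerm w b) := by
  have hbj : b < j := by rw [Fin.lt_def]; omega
  have h1 := key_lt_decode (key_sorted w hbj)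
  rcases lt_or_eq_of_le h1.1 with hlt | heq
  · exact hlt
  · exact absurd (h1.2 heq.symm) (not_lt.2 (le_of_lt hd))

/-- The letter after a drop is the smallest letter of its `w`-value class. -/
lemma first_of_block {w : Fin n → ℕ} (hw : IsRGF w) {b j : Fin n}
    (hj : (j : ℕ) = (b : ℕ) + 1)
    (hdrop : w (sortPerm w j) < w (sortPerm w b)) :
    ∀ hne : (Tset w (w (sortPerm w j))).Nonempty,
      sortPerm w j = M w (w (sortPerm w j)) hne := by
  intro hne
  set v := w (sortPerm w j) with hv
  apply le_antisymm
  · -- sortPerm w j ≤ M : the position r of M satisfies j ≤ r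
    set m := M w v hne with hm
    have hwm : w m = v := w_M hw (hw.1 _) hne
    set r := (sortPerm w).symm m with hr
    have hPr : w (sortPerm w r) = v := by rw [hr, Equiv.apply_symm_apply]; exact hwm
    have hbr : b < r := by
      by_contra hc
      push_neg at hc
      have := vseq_antitone w hc
      rw [hPr] at this
      omega
    have hjr : j ≤ r := by rw [Fin.le_def]; rw [Fin.lt_def] at hbr; omega
    rcases lt_or_eq_of_le hjr with hlt | heq
    · have := letter_lt_of_eq w hlt (by rw [hPr, ← hv])
      rw [hr, Equiv.apply_symm_apply] at this
      exact le_of_lt this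
    · rw [heq, hr, Equiv.apply_symm_apply]
  · exact M_min hne (le_refl _)

/-- Drops are of size exactly one. -/
lemma drop_one {w : Fin n → ℕ} (hw : IsRGF w) {b j : Fin n}
    (hj : (j : ℕ) = (b : ℕ) + 1)
    (hdrop : w (sortPerm w j) < w (sortPerm w b)) :
    w (sortPerm w j) + 1 = w (sortPerm w b) := by
  set v := w (sortPerm w j) with hv
  by_contra hc
  have h2 : v + 2 ≤ w (sortPerm w b) := by omega
  have hbk : v + 1 ≤ bk w := by have := le_bk (w := w) (sortPerm w b); omega
  have hne : (Tset w (v + 1)).Nonempty := Tset_nonempty (by omega) hbk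
  set m := M w (v + 1) hne with hm
  have hwm : w m = v + 1 := w_M hw (by omega) hne
  set r := (sortPerm w).symm m with hr
  have hPr : w (sortPerm w r) = v + 1 := by rw [hr, Equiv.apply_symm_apply]; exact hwm
  have hbr : b < r := by
    by_contra hcc
    push_neg at hcc
    have := vseq_antitone w hcc
    rw [hPr] at this
    omega
  have hrj : r < j := by
    by_contra hcc
    push_neg at hcc
    have := vseq_antitone w hcc
    rw [hPr, ← hv] at this
    omega
  rw [Fin.lt_def] at hbr hrj
  omega

/-- Backward: a drop of `w`-values is a descent. -/
lemma desc_of_drop {w : Fin n → ℕ} (hw : IsRGF w) {b j : Fin n}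
    (hj : (j : ℕ) = (b : ℕ) + 1)
    (hdrop : w (sortPerm w j) < w (sortPerm w b)) :
    sortPerm w j < sortPerm w b := by
  set v := w (sortPerm w j) with hv
  have hbk : v + 1 ≤ bk w := by have := le_bk (w := w) (sortPerm w b); omega
  have hne : (Tset w v).Nonempty := ⟨sortPerm w j, mem_Tset.2 (le_refl _)⟩
  have hne' : (Tset w (v + 1)).Nonempty := Tset_nonempty (by omega) hbk
  have h1 : sortPerm w j = M w v hne := first_of_block hw hj hdrop hne
  have h2 : M w v hne < M w (v + 1) hne' := M_lt_M hw (hw.1 _) (by omega) hne hne'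
  have h3 : M w (v + 1) hne' ≤ sortPerm w b := M_min hne' (by omega)
  rw [h1]
  exact lt_of_lt_of_le h2 h3

lemma mem_descBars_sort {w : Fin n → ℕ} (hw : IsRGF w) {b : Fin n} :
    b ∈ descBars (sortPerm w) ↔
      ∃ j : Fin n, (j : ℕ) = (b : ℕ) + 1 ∧ w (sortPerm w j) < w (sortPerm w b) := by
  rw [mem_descBars]
  constructor
  · rintro ⟨j, hj, hd⟩
    exact ⟨j, hj, drop_of_desc hj hd⟩
  · rintro ⟨j, hj, hd⟩
    exact ⟨j, hj, desc_of_drop hw hj hd⟩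

/-- The descent count to the right of `q` equals `w (sortPerm w q) - 1`. -/
lemma card_desc_right {w : Fin n → ℕ} (hw : IsRGF w) (q : Fin n) :
    ((descBars (sortPerm w)).filter fun x => q ≤ x).card = w (sortPerm w q) - 1 := by
  have hcard : ((descBars (sortPerm w)).filter fun x => q ≤ x).card
      = (Finset.Icc 2 (w (sortPerm w q))).card := by
    apply Finset.card_nbij (fun b => w (sortPerm w b))
    · intro b hb
      simp only [Finset.mem_coe, Finset.mem_filter] at hb
      obtain ⟨j, hj, hd⟩ := (mem_descBars_sort hw).1 hb.1
      have h1 := drop_one hw hj hd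
      have h2 := hw.1 (sortPerm w j)
      have h3 := vseq_antitone w hb.2
      exact Finset.mem_Icc.2 ⟨by beta_reduce; omega, h3⟩
    · intro b hb b' hb' he
      simp only [Finset.mem_coe, Finset.mem_filter] at hb hb'
      rcases lt_trichotomy b b' with hc | hc | hc
      · exfalso
        obtain ⟨j, hj, hd⟩ := (mem_descBars_sort hw).1 hb.1
        have h1 := drop_one hw hj hd
        have hjb' : j ≤ b' := by rw [Fin.le_def]; rw [Fin.lt_def] at hc; omega
        have h3 := vseq_antitone w hjb'
        simp only at he
        omega
      · exact hc
      · exfalso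
        obtain ⟨j, hj, hd⟩ := (mem_descBars_sort hw).1 hb'.1
        have h1 := drop_one hw hj hd
        have hjb : j ≤ b := by rw [Fin.le_def]; rw [Fin.lt_def] at hc; omega
        have h3 := vseq_antitone w hjb
        simp only at he
        omega
    · intro v hv
      simp only [Finset.mem_coe, Finset.mem_Icc] at hv
      have hbk : v - 1 ≤ bk w := by have := le_bk (w := w) (sortPerm w q); omega
      have hneL : (Tset w (v - 1)).Nonempty := Tset_nonempty (by omega) hbk
      set m := M w (v - 1) hneL with hm
      have hwm : w m = v - 1 := w_M hw (by omega) hneL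
      set r := (sortPerm w).symm m with hr
      have hPr : w (sortPerm w r) = v - 1 := by rw [hr, Equiv.apply_symm_apply]; exact hwm
      have hFne : (Finset.univ.filter fun x => w (sortPerm w x) < v).Nonempty :=
        ⟨r, Finset.mem_filter.2 ⟨Finset.mem_univ _, by omega⟩⟩
      set r0 := (Finset.univ.filter fun x => w (sortPerm w x) < v).min' hFne with hr0
      have hr0mem : w (sortPerm w r0) < v := by
        have := Finset.min'_mem _ hFne
        rw [← hr0] at this
        exact (Finset.mem_filter.1 this).2
      have hqr0 : q < r0 := by
        by_contra hc
        push_neg at hc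
        have := vseq_antitone w hc
        omega
      have hr0pos : 0 < (r0 : ℕ) := by rw [Fin.lt_def] at hqr0; omega
      set b : Fin n := ⟨(r0 : ℕ) - 1, by have := r0.isLt; omega⟩ with hb
      have hbr0 : b < r0 := by rw [Fin.lt_def]; simp only [hb]; omega
      have hwb : v ≤ w (sortPerm w b) := by
        by_contra hc
        push_neg at hc
        have : r0 ≤ b := Finset.min'_le (Finset.univ.filter fun x => w (sortPerm w x) < v) b
          (Finset.mem_filter.2 ⟨Finset.mem_univ _, hc⟩)
        exact absurd this (not_le.2 hbr0)
      have hj : (r0 : ℕ) = (b : ℕ) + 1 := by simp only [hb]; omega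
      have hdrop : w (sortPerm w r0) < w (sortPerm w b) := by omega
      have hbD : b ∈ descBars (sortPerm w) := (mem_descBars_sort hw).2 ⟨r0, hj, hdrop⟩
      have hwr0 : w (sortPerm w r0) = v - 1 := by
        have h1 : r0 ≤ r := Finset.min'_le _ _ (Finset.mem_filter.2 ⟨Finset.mem_univ _, by omega⟩)
        have h2 := vseq_antitone w h1
        omega
      have h1 := drop_one hw hj hdrop
      refine ⟨b, ?_, show w (sortPerm w b) = v by omega⟩
      simp only [Finset.mem_coe, Finset.mem_filter]
      refine ⟨hbD, ?_⟩
      rw [Fin.le_def]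
      rw [Fin.lt_def] at hqr0
      simp only [hb]
      omega
  rw [hcard, Nat.card_Icc]
  omega

lemma theta0_sortPerm {w : Fin n → ℕ} (hw : IsRGF w) : theta0 (sortPerm w) = w := by
  funext i
  rw [theta0_apply, wt]
  have h1 := card_desc_right hw ((sortPerm w).symm i)
  rw [Equiv.apply_symm_apply] at h1
  rw [h1]
  have := hw.1 i
  omega

lemma sortPerm_avoids {w : Fin n → ℕ} (hw : IsRGF w) : Avoids132 (pw (sortPerm w)) := by
  rintro a b j' hab hj' ⟨h1, h2⟩
  simp only [pw] at h1 h2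
  have h1' : sortPerm w a < sortPerm w j' := Fin.lt_def.2 (by omega)
  have h2' : sortPerm w j' < sortPerm w b := Fin.lt_def.2 (by omega)
  have hdrop : w (sortPerm w j') < w (sortPerm w b) := drop_of_desc hj' h2'
  set v := w (sortPerm w j') with hv
  have hne : (Tset w v).Nonempty := ⟨sortPerm w j', mem_Tset.2 (le_refl _)⟩
  have hbk : v + 1 ≤ bk w := by have := le_bk (w := w) (sortPerm w b); omega
  have hne' : (Tset w (v + 1)).Nonempty := Tset_nonempty (by omega) hbk
  have hfb : sortPerm w j' = M w v hne := first_of_block hw hj' hdrop hne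
  have hMlt : M w v hne < M w (v + 1) hne' := M_lt_M hw (hw.1 _) (by omega) hne hne'
  have hwa : v + 1 ≤ w (sortPerm w a) := by
    have := vseq_antitone w (le_of_lt hab)
    omega
  have hMa : M w (v + 1) hne' ≤ sortPerm w a := M_min hne' hwa
  have : sortPerm w j' < sortPerm w a := by
    rw [hfb]
    exact lt_of_lt_of_le hMlt hMa
  exact absurd h1' (not_lt.2 (le_of_lt this))

end Stmt15Aux
/-- θ induces a bijection between 1-32-avoiding permutations of [n] and RGFs of
length n, sending MAJ to ls, des + 1 to bk, and the last letter to pro. -/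
theorem stmt15 (n : ℕ) (hn : 0 < n) :
    Set.BijOn (fun p : Equiv.Perm (Fin n) => theta0 p)
        {p | Avoids132 (pw p)} {w : Fin n → ℕ | IsRGF w} ∧
      ∀ p : Equiv.Perm (Fin n), Avoids132 (pw p) →
        majW (pw p) = ls (theta0 p) ∧
        desW (pw p) + 1 = bk (theta0 p) ∧
        pw p ⟨n - 1, Nat.sub_lt hn Nat.one_pos⟩ = pro (theta0 p) := by
  constructor
  · refine ⟨?_, ?_, ?_⟩
    · intro p hp
      exact Stmt15Aux.avoids_isRGF hp
    · intro p _ p' _ h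
      exact Stmt15Aux.theta0_injOn h
    · intro w hw
      exact ⟨Stmt15Aux.sortPerm w, Stmt15Aux.sortPerm_avoids hw, Stmt15Aux.theta0_sortPerm hw⟩
  · intro p hp
    refine ⟨Stmt15Aux.maj_eq_ls hp, ?_, ?_⟩
    · rw [Stmt15Aux.desW_eq, Stmt15Aux.bk_theta0 p hn]
    · exact (Stmt15Aux.pro_theta0 p hn).symm
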